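/- Let N be a real s × s matrix with N^k = 0 for a positive integer k, and let u : ℝ → ℝ^s be infinitely differentiable. Define z : ℝ → ℝ^s by z(t) = Σ_{i=0}^{k−1} (−1)^i · N^i · u^{(i)}(t), where u^{(i)} denotes the i-th derivative of u. Then z is differentiable and satisfies N · z′(t) = −z(t) + u(t) for all t ∈ ℝ. -/

import Mathlib

/-- Conversely, `z(t) = Σ_{i=0}^{k−1} (−1)^i N^i u^{(i)}(t)` is differentiable
and solves the purely algebraic subsystem `N z′ = −z + u` when `N^k = 0`. -/
theorem algebraic_subsystem_solution_exists {s : ℕ} (k : ℕ) (hk : 0 < k)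
    (N : Matrix (Fin s) (Fin s) ℝ) (hN : N ^ k = 0)
    (u : ℝ → Fin s → ℝ) (hu : ContDiff ℝ (⊤ : ℕ∞) u)
    (z : ℝ → Fin s → ℝ)
    (hz : ∀ t : ℝ,
      z t = ∑ i ∈ Finset.range k,
        ((-1 : ℝ) ^ i) • (N ^ i).mulVec (iteratedDeriv i u t)) :
    Differentiable ℝ z ∧ ∀ t : ℝ, N.mulVec (deriv z t) = -z t + u t := by
  have hzf : z = fun t => ∑ i ∈ Finset.range k,
      ((-1 : ℝ) ^ i) • (N ^ i).mulVec (iteratedDeriv i u t) := funext hz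
  have hdiff : ∀ i : ℕ, Differentiable ℝ (iteratedDeriv i u) := fun i =>
    hu.differentiable_iteratedDeriv i (by exact_mod_cast lt_top_iff_ne_top.2 (by simp))
  -- derivative of z
  have hder : ∀ t : ℝ, HasDerivAt z
      (∑ i ∈ Finset.range k,
        ((-1 : ℝ) ^ i) • (N ^ i).mulVec (iteratedDeriv (i + 1) u t)) t := by
    intro t
    rw [hzf]
    refine HasDerivAt.fun_sum fun i _ => ?_
    have h1 : HasDerivAt (iteratedDeriv i u) (iteratedDeriv (i + 1) u t) t := by
      rw [iteratedDeriv_succ]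
      exact ((hdiff i) t).hasDerivAt
    have L := LinearMap.toContinuousLinearMap ((N ^ i).mulVecLin)
    have h2 : HasDerivAt (fun t => (N ^ i).mulVec (iteratedDeriv i u t))
        ((N ^ i).mulVec (iteratedDeriv (i + 1) u t)) t := by
      have := (LinearMap.toContinuousLinearMap
        ((N ^ i).mulVecLin)).hasFDerivAt.comp_hasDerivAt t h1
      exact this
    exact h2.const_smul ((-1 : ℝ) ^ i)
  refine ⟨fun t => (hder t).differentiableAt, fun t => ?_⟩
  rw [(hder t).deriv]
  -- push mulVec inside the sum
  have hpush : N.mulVec (∑ i ∈ Finset.range k,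
      ((-1 : ℝ) ^ i) • (N ^ i).mulVec (iteratedDeriv (i + 1) u t))
      = ∑ i ∈ Finset.range k,
        ((-1 : ℝ) ^ i) • (N ^ (i + 1)).mulVec (iteratedDeriv (i + 1) u t) := by
    rw [← Matrix.mulVecLin_apply, map_sum]
    refine Finset.sum_congr rfl fun i _ => ?_
    rw [map_smul, Matrix.mulVecLin_apply, Matrix.mulVec_mulVec, ← pow_succ']
  rw [hpush]
  obtain ⟨m, rfl⟩ : ∃ m, k = m + 1 := ⟨k - 1, (Nat.succ_pred_eq_of_pos hk).symm⟩
  rw [Finset.sum_range_succ, hN, hz t, Finset.sum_range_succ']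
  simp only [Matrix.zero_mulVec, smul_zero, add_zero, pow_zero, one_smul,
    Matrix.one_mulVec, iteratedDeriv_zero, pow_succ]
  rw [neg_add, add_assoc, neg_add_cancel, add_zero, ← Finset.sum_neg_distrib]
  refine Finset.sum_congr rfl fun i _ => ?_
  rw [← neg_smul]
  ring_nf
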